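/- (Equivalence of Moore exponent set and MRD/scatteredness for monomial codes, one direction) Let I = {i₀,…,i_{k-1}} ⊆ {0,…,n-1} with k ≤ n. Then I is a Moore exponent set for q and n if and only if U = {(x^{q^{i₀}}, x^{q^{i₁}}, …, x^{q^{i_{k-1}}}) : x ∈ 𝔽_{q^n}} is an 𝔽_q-subspace of 𝔽_{q^n}^k such that dim_{𝔽_q}(U ∩ H) ≤ k-1 for every 𝔽_{q^n}-hyperplane H of 𝔽_{q^n}^k (i.e., U defines a linear set scattered with respect to hyperplanes). -/

import Mathlib

/-- `I = {i₀, …, i_{k-1}} ⊆ {0, …, n-1}` is a Moore exponent set for `q` and `n` iff the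
subspace `U = {(x^{q^{i₀}}, …, x^{q^{i_{k-1}}}) : x ∈ 𝔽_{q^n}}` meets every
`𝔽_{q^n}`-hyperplane of `𝔽_{q^n}^k` in an `𝔽_q`-subspace of dimension at most `k - 1`,
i.e. every nonzero `q`-polynomial `∑ a_j x^{q^{i_j}}` has kernel of `𝔽_q`-dimension at
most `k - 1` (cardinality at most `q^(k-1)`). -/
theorem stmt_15 (q n k : ℕ) (hq : IsPrimePow q) (hk : 1 ≤ k) (hkn : k ≤ n)
    (Fq K : Type*) [Field Fq] [Field K] [Algebra Fq K]
    [Fintype Fq] [Fintype K]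
    (hcard_q : Fintype.card Fq = q) (hcard_K : Fintype.card K = q ^ n)
    (i : Fin k → ℕ) (hilt : ∀ c, i c < n) (hiinj : Function.Injective i) :
    (∀ A : Fin k → K,
        (Matrix.of fun r c => A r ^ q ^ i c : Matrix (Fin k) (Fin k) K).det = 0 ↔
          ¬ LinearIndependent Fq A) ↔
      (∀ a : Fin k → K, a ≠ 0 →
        Nat.card {x : K | ∑ j, a j * x ^ q ^ i j = 0} ≤ q ^ (k - 1)) := by
  classical
  have hq1 : 1 < q := hq.one_lt
  obtain ⟨p, e, pp, he, hpe⟩ := hq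
  have pp' : p.Prime := pp.nat_prime
  -- characteristic of Fq is p
  have hFqchar : CharP Fq p := by
    have hc : (ringChar Fq).Prime := CharP.char_is_prime Fq (ringChar Fq)
    obtain ⟨m, -, hm⟩ := FiniteField.card Fq (ringChar Fq)
    have hpq : p = ringChar Fq := by
      have hdvd : p ∣ (ringChar Fq) ^ (m : ℕ) := by
        rw [← hm, hcard_q, ← hpe]
        exact dvd_pow_self p (by omega)
      exact ((Nat.prime_dvd_prime_iff_eq pp' hc).mp (pp'.dvd_of_dvd_pow hdvd))
    rw [hpq]
    exact ringChar.charP Fq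
  haveI := hFqchar
  haveI hKchar : CharP K p :=
    charP_of_injective_algebraMap (algebraMap Fq K).injective p
  haveI : ExpChar K p := .prime pp'
  haveI : Module.Finite Fq K := Module.finite_iff_finite.mpr inferInstance
  -- basic power identities
  have hqm : ∀ m : ℕ, q ^ m = p ^ (e * m) := by
    intro m; rw [← hpe, ← pow_mul]
  have hsum : ∀ (m : ℕ) (x : Fin k → K),
      (∑ r, x r) ^ q ^ m = ∑ r, x r ^ q ^ m := by
    intro m x
    have h := map_sum (iterateFrobenius K p (e * m)) x Finset.univ
    simp only [iterateFrobenius_def] at h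
    rw [hqm m]
    exact h
  have hadd : ∀ (m : ℕ) (x y : K), (x + y) ^ q ^ m = x ^ q ^ m + y ^ q ^ m := by
    intro m x y
    rw [hqm m]
    exact add_pow_expChar_pow ..
  have hsc : ∀ (m : ℕ) (c : Fq) (x : K), (c • x) ^ q ^ m = c • x ^ q ^ m := by
    intro m c x
    have hc : c ^ q ^ m = c := by
      rw [← hcard_q]; exact FiniteField.pow_card_pow m c
    rw [Algebra.smul_def, Algebra.smul_def, mul_pow, ← map_pow, hc]
  have hz : ∀ m : ℕ, (0 : K) ^ q ^ m = 0 := fun m =>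
    zero_pow (pow_ne_zero _ (by omega))
  -- the q-polynomial as an Fq-linear map
  let f : (Fin k → K) → (K →ₗ[Fq] K) := fun a =>
    { toFun := fun x => ∑ j, a j * x ^ q ^ i j
      map_add' := by
        intro x y
        simp only [hadd, mul_add, Finset.sum_add_distrib]
      map_smul' := by
        intro c x
        simp only [hsc, RingHom.id_apply, Finset.smul_sum, mul_smul_comm] }
  have hker_card : ∀ a : Fin k → K,
      Nat.card {x : K | ∑ j, a j * x ^ q ^ i j = 0}
        = q ^ Module.finrank Fq (LinearMap.ker (f a)) := by
    intro a
    have hset : {x : K | ∑ j, a j * x ^ q ^ i j = 0} = (LinearMap.ker (f a) : Set K) := by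
      ext x; simp [f, LinearMap.mem_ker]
    rw [hset]
    show Nat.card (LinearMap.ker (f a)) = _
    haveI : Fintype (LinearMap.ker (f a)) := Fintype.ofFinite _
    rw [Nat.card_eq_fintype_card, Module.card_eq_pow_finrank (K := Fq), hcard_q]
  constructor
  · -- Moore ⇒ kernel bound
    intro hMoore a ha
    rw [hker_card a]
    by_contra hlt
    push_neg at hlt
    have hdim : k ≤ Module.finrank Fq (LinearMap.ker (f a)) := by
      have := (pow_lt_pow_iff_right₀ hq1).mp hlt
      omega
    -- pick k linearly independent kernel elements
    let b := Module.finBasis Fq (LinearMap.ker (f a))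
    let A : Fin k → K := fun r => (b (Fin.castLE hdim r) : K)
    have hAind : LinearIndependent Fq A := by
      have h1 : LinearIndependent Fq (fun r : Fin k => b (Fin.castLE hdim r)) :=
        b.linearIndependent.comp _ (Fin.castLE_injective hdim)
      exact h1.map' (LinearMap.ker (f a)).subtype (Submodule.ker_subtype _)
    have hdet : (Matrix.of fun r c => A r ^ q ^ i c : Matrix (Fin k) (Fin k) K).det = 0 := by
      rw [← Matrix.exists_mulVec_eq_zero_iff]
      refine ⟨a, ha, ?_⟩
      funext r
      have hm : (b (Fin.castLE hdim r) : K) ∈ LinearMap.ker (f a) := (b _).2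
      have h2 : ∑ j, a j * A r ^ q ^ i j = 0 := hm
      simp only [Matrix.mulVec, dotProduct, Matrix.of_apply, Pi.zero_apply]
      simpa [mul_comm] using h2
    exact (hMoore A).mp hdet hAind
  · -- kernel bound ⇒ Moore
    intro hbound A
    constructor
    · -- det = 0 → dependent
      intro hdet hAind
      obtain ⟨a, ha, hva⟩ := (Matrix.exists_mulVec_eq_zero_iff).mpr hdet
      have hmem : ∀ r, A r ∈ LinearMap.ker (f a) := by
        intro r
        have := congrFun hva r
        simpa [Matrix.mulVec, dotProduct, f, LinearMap.mem_ker, mul_comm] using this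
      have hle : k ≤ Module.finrank Fq (LinearMap.ker (f a)) := by
        have hA' : LinearIndependent Fq
            (fun r : Fin k => (⟨A r, hmem r⟩ : LinearMap.ker (f a))) := by
          refine LinearIndependent.of_comp (LinearMap.ker (f a)).subtype ?_
          exact hAind
        simpa using hA'.fintype_card_le_finrank
      have := hbound a ha
      rw [hker_card a] at this
      have := (pow_le_pow_iff_right₀ hq1).mp this
      omega
    · -- dependent → det = 0
      intro hAdep
      obtain ⟨g, hg, r0, hr0⟩ := Fintype.not_linearIndependent_iff.mp hAdep
      rw [← Matrix.exists_vecMul_eq_zero_iff]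
      refine ⟨fun r => algebraMap Fq K (g r), ?_, ?_⟩
      · intro h
        exact hr0 (by
          have := congrFun h r0
          simpa using (map_eq_zero_iff _ (algebraMap Fq K).injective).mp this)
      · funext c
        have h3 : ∀ r, algebraMap Fq K (g r) * A r ^ q ^ i c = (g r • A r) ^ q ^ i c := by
          intro r; rw [hsc, Algebra.smul_def]
        simp only [Matrix.vecMul, dotProduct, Matrix.of_apply, Pi.zero_apply]
        rw [Finset.sum_congr rfl fun r _ => h3 r, ← hsum (i c), hg, hz]
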